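/- Let X be a real-valued integrable random variable and let α₁, β₁, α₂, β₂ > 0 with α₁/β₁ ≤ α₂/β₂. If t₁ satisfies α₁·H(t₁) = β₁·G(t₁) and t₂ satisfies α₂·H(t₂) = β₂·G(t₂), then t₁ ≤ t₂. -/

import Mathlib

open MeasureTheory

/-- Monotonicity of (α,β)-expectiles in the ratio α/β. -/
theorem expectile_monotone_alpha_beta
    {Ω : Type*} [MeasurableSpace Ω] (μ : Measure Ω) [IsProbabilityMeasure μ]
    (X : Ω → ℝ) (hX : Integrable X μ)
    (G H : ℝ → ℝ)
    (hG : ∀ t, G t = ∫ ω, max (t - X ω) 0 ∂μ)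
    (hH : ∀ t, H t = ∫ ω, max (X ω - t) 0 ∂μ)
    (α₁ β₁ α₂ β₂ : ℝ) (hα₁ : 0 < α₁) (hβ₁ : 0 < β₁) (hα₂ : 0 < α₂) (hβ₂ : 0 < β₂)
    (hratio : α₁ / β₁ ≤ α₂ / β₂) (t₁ t₂ : ℝ)
    (h1 : α₁ * H t₁ = β₁ * G t₁)
    (h2 : α₂ * H t₂ = β₂ * G t₂) :
    t₁ ≤ t₂ := by
  by_contra hlt
  push_neg at hlt
  have intG : ∀ t : ℝ, Integrable (fun ω => max (t - X ω) 0) μ := fun t =>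
    ((integrable_const t).sub hX).pos_part
  have intH : ∀ t : ℝ, Integrable (fun ω => max (X ω - t) 0) μ := fun t =>
    (hX.sub (integrable_const t)).pos_part
  -- monotonicity
  have hGmono : G t₂ ≤ G t₁ := by
    rw [hG, hG]
    exact integral_mono (intG t₂) (intG t₁)
      (fun ω => max_le_max (by linarith) le_rfl)
  have hHmono : H t₁ ≤ H t₂ := by
    rw [hH, hH]
    exact integral_mono (intH t₁) (intH t₂)
      (fun ω => max_le_max (by linarith) le_rfl)
  have hH2nonneg : 0 ≤ H t₂ := by
    rw [hH]
    exact integral_nonneg fun ω => le_max_right _ _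
  -- key identity : G t - H t = t - E X
  have key : ∀ t : ℝ, G t - H t = t - ∫ ω, X ω ∂μ := by
    intro t
    rw [hG, hH, ← integral_sub (intG t) (intH t)]
    have heq : (fun ω => max (t - X ω) 0 - max (X ω - t) 0) = fun ω => t - X ω := by
      funext ω
      rcases le_total (X ω) t with h | h
      · rw [max_eq_left (by linarith), max_eq_right (by linarith)]
        ring
      · rw [max_eq_right (by linarith), max_eq_left (by linarith)]
        ring
    rw [heq, integral_sub (integrable_const t) hX, integral_const]
    simp
  set a := α₁ / β₁ with ha_def
  set b := α₂ / β₂ with hb_def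
  have ha : 0 < a := div_pos hα₁ hβ₁
  have e1 : G t₁ = a * H t₁ := by
    rw [ha_def]
    field_simp
    linarith
  have e2 : G t₂ = b * H t₂ := by
    rw [hb_def]
    field_simp
    linarith
  -- chain: b H₂ = G₂ ≤ G₁ = a H₁ ≤ a H₂ ≤ b H₂
  have c1 : b * H t₂ ≤ a * H t₁ := by rw [← e1, ← e2]; exact hGmono
  have c2 : a * H t₁ ≤ a * H t₂ := mul_le_mul_of_nonneg_left hHmono ha.le
  have c3 : a * H t₂ ≤ b * H t₂ := mul_le_mul_of_nonneg_right hratio hH2nonneg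
  have hHeq : H t₁ = H t₂ := by
    have : a * H t₁ = a * H t₂ := le_antisymm c2 (c3.trans c1)
    exact mul_left_cancel₀ ha.ne' this
  have hGeq : G t₁ = G t₂ := by
    rw [e1, e2]
    linarith [le_antisymm c1 (c2.trans c3)]
  have k1 := key t₁
  have k2 := key t₂
  linarith
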